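/- Suppose r > 0, σ > 0, K > 0, δ > 0 and k* > K, and set D := (k*/K)^{λ/σ} − (k*/K)^{−λ/σ} (> 0). The function v(x) := (k* − K)(k*/x)^κ·((K/x)^{−λ/σ} − (K/x)^{λ/σ})/D + δ(K/x)^κ·((k*/x)^{λ/σ} − (k*/x)^{−λ/σ})/D satisfies (1/2)σ²x²v″(x) + (r − d)x·v′(x) = r·v(x) for all x > 0, v(K) = δ, and v(k*) = k* − K. Moreover, v′(k*) = 1 holds if and only if k* satisfies the equation (FOC1): (k*/K)^{2λ/σ}(−2(K/k*)^{κ+λ/σ}δλ + (k* − K)(λ − κσ + (K/k*)^{2λ/σ}(λ + κσ))) = k*(−1 + (k*/K)^{2λ/σ})σ. -/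

import Mathlib

noncomputable section

private lemma hasDerivAt_crpow (c p : ℝ) {x : ℝ} (hx : x ≠ 0) :
    HasDerivAt (fun y : ℝ => c * y ^ p) (c * p * x ^ (p - 1)) x := by
  simpa [mul_assoc] using (Real.hasDerivAt_rpow_const (p := p) (Or.inl hx)).const_mul c

/-- The candidate function `v` on `(K, k*)` is `r`-harmonic on `(0, ∞)`, satisfies
`v(K) = δ` and `v(k*) = k* − K`, and the smooth-fit condition `v′(k*) = 1` holds if and only
if `k*` satisfies the first-order condition (FOC1). -/
theorem bvp_solution_middle_region (r d σ K δ : ℝ)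
    (hr : 0 < r) (hd : 0 ≤ d) (hσ : 0 < σ) (hK : 0 < K) (hδ : 0 < δ)
    (lam κ : ℝ)
    (hlam : lam = Real.sqrt (2 * r + ((r - d - σ ^ 2 / 2) / σ) ^ 2))
    (hκ : κ = (r - d - σ ^ 2 / 2) / σ ^ 2)
    (k : ℝ) (hk : K < k)
    (D : ℝ) (hD : D = (k / K) ^ (lam / σ) - (k / K) ^ (-(lam / σ)))
    (v : ℝ → ℝ)
    (hv : v = fun x =>
      (k - K) * (k / x) ^ κ * (((K / x) ^ (-(lam / σ)) - (K / x) ^ (lam / σ)) / D) +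
        δ * (K / x) ^ κ * (((k / x) ^ (lam / σ) - (k / x) ^ (-(lam / σ))) / D)) :
    (∀ x : ℝ, 0 < x →
      1 / 2 * σ ^ 2 * x ^ 2 * deriv (deriv v) x + (r - d) * x * deriv v x = r * v x) ∧
    v K = δ ∧ v k = k - K ∧
    (deriv v k = 1 ↔
      (k / K) ^ (2 * lam / σ) *
          (-2 * (K / k) ^ (κ + lam / σ) * δ * lam +
            (k - K) * (lam - κ * σ + (K / k) ^ (2 * lam / σ) * (lam + κ * σ))) =
        k * (-1 + (k / K) ^ (2 * lam / σ)) * σ) := by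
  have hσ0 : σ ≠ 0 := hσ.ne'
  have hk0 : 0 < k := hK.trans hk
  have hlam0 : 0 < lam := by
    rw [hlam]; apply Real.sqrt_pos.2; positivity
  have hlam2 : lam ^ 2 = 2 * r + (κ * σ) ^ 2 := by
    rw [hlam, Real.sq_sqrt (by positivity), hκ]; field_simp
  have hκσ : κ * σ ^ 2 = r - d - σ ^ 2 / 2 := by rw [hκ]; field_simp
  set μ := lam / σ with hμdef
  have hμ0 : 0 < μ := div_pos hlam0 hσ
  have hq : 0 < k / K := div_pos hk0 hK
  have hq' : 0 < K / k := div_pos hK hk0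
  have hq1 : 1 < k / K := (one_lt_div hK).2 hk
  -- quadratic identities
  have hσμ : σ * μ = lam := by rw [hμdef]; field_simp
  have hμ2 : σ ^ 2 * μ ^ 2 = 2 * r + (κ * σ) ^ 2 := by
    linear_combination hlam2 + (σ * μ + lam) * hσμ
  have hquad1 : 1 / 2 * σ ^ 2 * ((μ - κ) * (μ - κ - 1)) + (r - d) * (μ - κ) = r := by
    linear_combination (1/2 : ℝ) * hμ2 - (μ - κ) * hκσ
  have hquad2 : 1 / 2 * σ ^ 2 * ((-μ - κ) * (-μ - κ - 1)) + (r - d) * (-μ - κ) = r := by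
    linear_combination (1/2 : ℝ) * hμ2 - (-μ - κ) * hκσ
  have ha1 : 1 < (k / K) ^ μ := (Real.one_lt_rpow_iff_of_pos hq).2 (Or.inl ⟨hq1, hμ0⟩)
  have hD0 : 0 < D := by
    rw [hD]
    have h2 : (k / K) ^ (-μ) < 1 := by
      rw [Real.rpow_neg hq.le]; exact inv_lt_one_of_one_lt₀ ha1
    linarith
  set p₁ := μ - κ with hp₁
  set p₂ := -μ - κ with hp₂
  set C₁ := ((k - K) * k ^ κ / K ^ μ - δ * K ^ κ / k ^ μ) / D with hC₁
  set C₂ := ((δ * K ^ κ * k ^ μ - (k - K) * k ^ κ * K ^ μ) / D) with hC₂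
  have hvw : ∀ x : ℝ, 0 < x → v x = C₁ * x ^ p₁ + C₂ * x ^ p₂ := by
    intro x hx
    have e1 : (K / x) ^ (-μ) = x ^ μ / K ^ μ := by
      rw [Real.rpow_neg (by positivity), Real.div_rpow hK.le hx.le, inv_div]
    have e2 : (k / x) ^ (-μ) = x ^ μ / k ^ μ := by
      rw [Real.rpow_neg (by positivity), Real.div_rpow hk0.le hx.le, inv_div]
    have e3 : x ^ p₁ = x ^ μ / x ^ κ := by rw [hp₁, Real.rpow_sub hx]
    have e4 : x ^ p₂ = 1 / x ^ μ / x ^ κ := by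
      rw [hp₂, show -μ - κ = -μ - κ from rfl, Real.rpow_sub hx, Real.rpow_neg hx.le,
        inv_eq_one_div]
    rw [hv, hC₁, hC₂]
    simp only [e1, e2, e3, e4, Real.div_rpow hk0.le hx.le, Real.div_rpow hK.le hx.le]
    have n1 : x ^ μ ≠ 0 := (Real.rpow_pos_of_pos hx μ).ne'
    have n2 : x ^ κ ≠ 0 := (Real.rpow_pos_of_pos hx κ).ne'
    have n3 : K ^ μ ≠ 0 := (Real.rpow_pos_of_pos hK μ).ne'
    have n4 : k ^ μ ≠ 0 := (Real.rpow_pos_of_pos hk0 μ).ne'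
    field_simp
    ring
  have hw' : ∀ x : ℝ, x ≠ 0 → HasDerivAt (fun y : ℝ => C₁ * y ^ p₁ + C₂ * y ^ p₂)
      (C₁ * p₁ * x ^ (p₁ - 1) + C₂ * p₂ * x ^ (p₂ - 1)) x :=
    fun x hx => (hasDerivAt_crpow C₁ p₁ hx).add (hasDerivAt_crpow C₂ p₂ hx)
  have hw1' : ∀ x : ℝ, x ≠ 0 → HasDerivAt
      (fun y : ℝ => C₁ * p₁ * y ^ (p₁ - 1) + C₂ * p₂ * y ^ (p₂ - 1))
      (C₁ * p₁ * (p₁ - 1) * x ^ (p₁ - 1 - 1) + C₂ * p₂ * (p₂ - 1) * x ^ (p₂ - 1 - 1)) x :=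
    fun x hx => (hasDerivAt_crpow (C₁ * p₁) (p₁ - 1) hx).add
      (hasDerivAt_crpow (C₂ * p₂) (p₂ - 1) hx)
  have hdv : ∀ x : ℝ, 0 < x →
      deriv v x = C₁ * p₁ * x ^ (p₁ - 1) + C₂ * p₂ * x ^ (p₂ - 1) := by
    intro x hx
    have h1 : v =ᶠ[nhds x] (fun y : ℝ => C₁ * y ^ p₁ + C₂ * y ^ p₂) :=
      Filter.eventuallyEq_of_mem (Ioi_mem_nhds hx) (fun y hy => hvw y hy)
    rw [h1.deriv_eq, (hw' x hx.ne').deriv]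
  have hddv : ∀ x : ℝ, 0 < x → deriv (deriv v) x =
      C₁ * p₁ * (p₁ - 1) * x ^ (p₁ - 1 - 1) + C₂ * p₂ * (p₂ - 1) * x ^ (p₂ - 1 - 1) := by
    intro x hx
    have h1 : deriv v =ᶠ[nhds x]
        (fun y : ℝ => C₁ * p₁ * y ^ (p₁ - 1) + C₂ * p₂ * y ^ (p₂ - 1)) :=
      Filter.eventuallyEq_of_mem (Ioi_mem_nhds hx) (fun y hy => hdv y hy)
    rw [h1.deriv_eq, (hw1' x hx.ne').deriv]
  have hODE : ∀ x : ℝ, 0 < x →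
      1 / 2 * σ ^ 2 * x ^ 2 * deriv (deriv v) x + (r - d) * x * deriv v x = r * v x := by
    intro x hx
    rw [hddv x hx, hdv x hx, hvw x hx]
    have f3 : x ^ (p₁ - 1) = x ^ p₁ / x := by rw [Real.rpow_sub hx, Real.rpow_one]
    have f4 : x ^ (p₂ - 1) = x ^ p₂ / x := by rw [Real.rpow_sub hx, Real.rpow_one]
    have f5 : x ^ (p₁ - 1 - 1) = x ^ p₁ / x / x := by
      rw [Real.rpow_sub hx (p₁ - 1) 1, Real.rpow_one, f3]
    have f6 : x ^ (p₂ - 1 - 1) = x ^ p₂ / x / x := by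
      rw [Real.rpow_sub hx (p₂ - 1) 1, Real.rpow_one, f4]
    rw [f3, f4, f5, f6]
    have gx : ∀ t : ℝ, x ^ 2 * (t / x / x) = t := by intro t; field_simp
    have gy : ∀ t : ℝ, x * (t / x) = t := by intro t; field_simp
    linear_combination (C₁ * x ^ p₁) * hquad1 + (C₂ * x ^ p₂) * hquad2 +
      (1 / 2 * σ ^ 2 * C₁ * p₁ * (p₁ - 1)) * gx (x ^ p₁) +
      (1 / 2 * σ ^ 2 * C₂ * p₂ * (p₂ - 1)) * gx (x ^ p₂) +
      ((r - d) * C₁ * p₁) * gy (x ^ p₁) + ((r - d) * C₂ * p₂) * gy (x ^ p₂)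
  have hvK : v K = δ := by
    rw [hv]
    simp only [div_self hK.ne', Real.one_rpow, ← hD]
    field_simp
    ring
  have hinvkK : K / k = (k / K)⁻¹ := by rw [inv_div]
  have hDk : (K / k) ^ (-μ) - (K / k) ^ μ = D := by
    rw [hD, hinvkK, Real.inv_rpow hq.le, Real.inv_rpow hq.le, ← Real.rpow_neg hq.le,
      ← Real.rpow_neg hq.le, neg_neg]
  have hvk : v k = k - K := by
    rw [hv]
    simp only [div_self hk0.ne', Real.one_rpow]
    rw [hDk]
    field_simp
    ring
  -- atoms
  set a := (k / K) ^ μ with hadef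
  set b := (K / k) ^ μ with hbdef
  set B := (K / k) ^ κ with hBdef
  have hb0 : 0 < b := Real.rpow_pos_of_pos hq' μ
  have hB0 : 0 < B := Real.rpow_pos_of_pos hq' κ
  have hab : a * b = 1 := by
    rw [hadef, hbdef, ← Real.mul_rpow hq.le hq'.le,
      div_mul_div_comm, mul_comm K k, div_self (by positivity), Real.one_rpow]
  have hbinv : (k / K) ^ (-μ) = b := by
    rw [Real.rpow_neg hq.le, hbdef, hinvkK, Real.inv_rpow hq.le]
  have hDab : D = a - b := by rw [hD, hbinv]
  have e2a : (k / K) ^ (2 * lam / σ) = a * a := by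
    rw [show 2 * lam / σ = μ + μ by rw [hμdef]; ring, Real.rpow_add hq]
  have e2b : (K / k) ^ (2 * lam / σ) = b * b := by
    rw [show 2 * lam / σ = μ + μ by rw [hμdef]; ring, Real.rpow_add hq']
  have eBb : (K / k) ^ (κ + μ) = B * b := Real.rpow_add hq' κ μ
  have ha_div : a = k ^ μ / K ^ μ := Real.div_rpow hk0.le hK.le μ
  have hb_div : b = K ^ μ / k ^ μ := Real.div_rpow hK.le hk0.le μ
  have hB_div : B = K ^ κ / k ^ κ := Real.div_rpow hK.le hk0.le κ
  have fk1 : k ^ (p₁ - 1) = k ^ μ / k ^ κ / k := by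
    rw [hp₁, Real.rpow_sub hk0 (μ - κ) 1, Real.rpow_one, Real.rpow_sub hk0]
  have fk2 : k ^ (p₂ - 1) = 1 / k ^ μ / k ^ κ / k := by
    rw [hp₂, Real.rpow_sub hk0 (-μ - κ) 1, Real.rpow_one, Real.rpow_sub hk0,
      Real.rpow_neg hk0.le, inv_eq_one_div]
  have n3 : K ^ μ ≠ 0 := (Real.rpow_pos_of_pos hK μ).ne'
  have n4 : k ^ μ ≠ 0 := (Real.rpow_pos_of_pos hk0 μ).ne'
  have n5 : k ^ κ ≠ 0 := (Real.rpow_pos_of_pos hk0 κ).ne'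
  have hE1 : (C₁ * p₁ * k ^ (p₁ - 1) + C₂ * p₂ * k ^ (p₂ - 1)) * (k * D) =
      (k - K) * ((μ - κ) * a + (μ + κ) * b) - 2 * μ * δ * B := by
    rw [fk1, fk2, hC₁, hC₂, hp₁, hp₂, ha_div, hb_div, hB_div]
    field_simp
    ring
  have hiff : deriv v k = 1 ↔
      (k - K) * ((μ - κ) * a + (μ + κ) * b) - 2 * μ * δ * B = k * D := by
    rw [hdv k hk0, ← hE1]
    constructor
    · intro h; rw [h, one_mul]
    · intro h
      exact mul_right_cancel₀ (by positivity) (h.trans (one_mul _).symm)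
  refine ⟨hODE, hvK, hvk, ?_⟩
  rw [hiff, e2a, e2b, eBb, ← hσμ]
  constructor
  · intro h
    linear_combination (σ * a) * h +
      (-2 * δ * μ * σ * B * a + (k - K) * σ * (μ + κ) * a * b - k * σ) * hab +
      (σ * a * k) * hDab
  · intro h
    have ha0 : 0 < a := Real.rpow_pos_of_pos hq μ
    have h2 : σ * a * ((k - K) * ((μ - κ) * a + (μ + κ) * b) - 2 * μ * δ * B - k * D) = 0 := by
      linear_combination h -
        (-2 * δ * μ * σ * B * a + (k - K) * σ * (μ + κ) * a * b - k * σ) * hab -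
        (σ * a * k) * hDab
    have h3 : (k - K) * ((μ - κ) * a + (μ + κ) * b) - 2 * μ * δ * B - k * D = 0 := by
      rcases mul_eq_zero.mp h2 with h4 | h4
      · exact absurd h4 (by positivity)
      · exact h4
    linarith

end
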